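/- For the two-node interval consensus dx_1/dt = a(ψ_2(x_2) − x_1), dx_2/dt = b(ψ_1(x_1) − x_2) with a, b > 0 and disjoint intervals q_1 < p_2, the unique equilibrium is (e_1, e_2) = (p_2, q_1), and it is globally asymptotically stable. -/

import Mathlib

open Finset Filter

/-- Saturation of `z` onto the interval `[p, q]`. -/
noncomputable def sat (p q z : ℝ) : ℝ := max p (min z q)

private lemma auxDeriv (k : ℝ) (c : ℝ) (y u : ℝ → ℝ)
    (hy : ∀ t, HasDerivAt y (k * (u t - y t)) t) (t : ℝ) :
    HasDerivAt (fun t => (y t - c) * Real.exp (k * t))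
      (Real.exp (k * t) * (k * (u t - c))) t := by
  have h1 : HasDerivAt (fun t => y t - c) (k * (u t - y t)) t := (hy t).sub_const c
  have h2 : HasDerivAt (fun t : ℝ => Real.exp (k * t)) (Real.exp (k * t) * k) t := by
    simpa using ((hasDerivAt_id t).const_mul k).exp
  have := h1.mul h2
  exact this.congr_deriv (by ring)

/-- If eventually the input is exactly `c`, the solution converges to `c`. -/
private lemma auxTendsto (k c T : ℝ) (hk : 0 < k) (y u : ℝ → ℝ)
    (hy : ∀ t, HasDerivAt y (k * (u t - y t)) t)
    (hu : ∀ t, T ≤ t → u t = c) :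
    Tendsto y atTop (nhds c) := by
  set g : ℝ → ℝ := fun t => (y t - c) * Real.exp (k * t) with hg
  have hgd : ∀ t, HasDerivAt g (Real.exp (k * t) * (k * (u t - c))) t := auxDeriv k c y u hy
  have hconst : ∀ t, T ≤ t → g t = g T := by
    intro t ht
    exact constant_of_has_deriv_right_zero (f := g) (a := T) (b := t)
      (fun s _ => ((hgd s).continuousAt).continuousWithinAt)
      (fun s hs => by
        have hus : u s = c := hu s hs.1
        simpa [hus] using (hgd s).hasDerivWithinAt)
      t ⟨ht, le_rfl⟩
  have hyform : ∀ t, T ≤ t → y t = c + (y T - c) * Real.exp (k * T - k * t) := by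
    intro t ht
    have h := hconst t ht
    have hexp : Real.exp (k * t) ≠ 0 := (Real.exp_pos _).ne'
    have : y t - c = (y T - c) * Real.exp (k * T - k * t) := by
      have := congrArg (fun z => z * Real.exp (-(k * t))) h
      simpa [hg, mul_assoc, ← Real.exp_add, sub_eq_add_neg] using this
    linarith [this]
  have hlim : Tendsto (fun t => c + (y T - c) * Real.exp (k * T - k * t)) atTop (nhds c) := by
    have h1 : Tendsto (fun t : ℝ => k * T - k * t) atTop atBot := by
      apply tendsto_atBot_add_const_left
      exact (tendsto_neg_atBot_iff.mpr (tendsto_atTop_atTop_of_monotone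
        (fun x y hxy => by nlinarith) (fun x => ⟨x / k, by field_simp; exact le_rfl⟩)))
    have h2 : Tendsto (fun t : ℝ => Real.exp (k * T - k * t)) atTop (nhds 0) :=
      Real.tendsto_exp_atBot.comp h1
    have := (h2.const_mul (y T - c)).const_add c
    simpa using this
  apply hlim.congr'
  filter_upwards [eventually_ge_atTop T] with t ht
  exact (hyform t ht).symm

/-- If the input is always at least `c`, eventually the solution exceeds any `d < c`. -/
private lemma auxLower (k c d : ℝ) (hk : 0 < k) (hd : d < c) (y u : ℝ → ℝ)
    (hy : ∀ t, HasDerivAt y (k * (u t - y t)) t)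
    (hu : ∀ t, c ≤ u t) :
    ∀ᶠ t in atTop, d ≤ y t := by
  set g : ℝ → ℝ := fun t => (y t - c) * Real.exp (k * t) with hg
  have hgd : ∀ t, HasDerivAt g (Real.exp (k * t) * (k * (u t - c))) t := auxDeriv k c y u hy
  have hmono : Monotone g := by
    apply monotone_of_deriv_nonneg
    · exact fun t => ((hgd t).differentiableAt)
    · intro t
      rw [(hgd t).deriv]
      have h3 : 0 ≤ u t - c := by linarith [hu t]
      positivity
  have hbound : ∀ t, 0 ≤ t → c + (y 0 - c) * Real.exp (-(k * t)) ≤ y t := by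
    intro t ht
    have h := hmono (le_refl 0 |>.trans ht)
    have h' : (y 0 - c) * Real.exp (k * 0) ≤ (y t - c) * Real.exp (k * t) := h
    have h2 := mul_le_mul_of_nonneg_right h' (Real.exp_pos (-(k * t))).le
    have e1 : Real.exp (k * t) * Real.exp (-(k * t)) = 1 := by
      rw [← Real.exp_add]; simp
    rw [mul_assoc (y t - c), e1, mul_one] at h2
    simp only [mul_zero, Real.exp_zero, one_mul] at h2
    linarith
  have hlim : Tendsto (fun t => c + (y 0 - c) * Real.exp (-(k * t))) atTop (nhds c) := by
    have h1 : Tendsto (fun t : ℝ => -(k * t)) atTop atBot := by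
      exact tendsto_neg_atBot_iff.mpr (tendsto_atTop_atTop_of_monotone
        (fun x y hxy => by nlinarith) (fun x => ⟨x / k, by field_simp; exact le_rfl⟩))
    have h2 := Real.tendsto_exp_atBot.comp h1
    have := (h2.const_mul (y 0 - c)).const_add c
    simpa using this
  have hev : ∀ᶠ t in atTop, d < c + (y 0 - c) * Real.exp (-(k * t)) :=
    hlim.eventually_const_lt hd
  filter_upwards [hev, eventually_ge_atTop (0:ℝ)] with t h1 h2
  exact le_trans h1.le (hbound t h2)

/-- Two-node interval consensus with disjoint intervals `q₁ < p₂`: the unique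
equilibrium is `(e₁, e₂) = (p₂, q₁)`, and it is globally asymptotically
stable (every solution converges to it). -/
theorem two_node_unique_globally_stable_equilibrium
    (a b : ℝ) (hb : 0 < a) (hb' : 0 < b)
    (p₁ q₁ p₂ q₂ : ℝ) (h₁ : p₁ ≤ q₁) (h₁₂ : q₁ < p₂) (h₂ : p₂ ≤ q₂) :
    (∀ e₁ e₂ : ℝ,
      (a * (sat p₂ q₂ e₂ - e₁) = 0 ∧ b * (sat p₁ q₁ e₁ - e₂) = 0) ↔
      (e₁ = p₂ ∧ e₂ = q₁)) ∧
    (∀ x₁ x₂ : ℝ → ℝ,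
      (∀ t, HasDerivAt x₁ (a * (sat p₂ q₂ (x₂ t) - x₁ t)) t) →
      (∀ t, HasDerivAt x₂ (b * (sat p₁ q₁ (x₁ t) - x₂ t)) t) →
      Tendsto x₁ atTop (nhds p₂) ∧ Tendsto x₂ atTop (nhds q₁)) := by
  constructor
  · intro e₁ e₂
    constructor
    · rintro ⟨he₁, he₂⟩
      have h1 : sat p₂ q₂ e₂ = e₁ := by
        have := mul_eq_zero.mp he₁
        rcases this with h | h
        · exact absurd h hb.ne'
        · linarith
      have h2 : sat p₁ q₁ e₁ = e₂ := by
        have := mul_eq_zero.mp he₂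
        rcases this with h | h
        · exact absurd h hb'.ne'
        · linarith
      have he1p : p₂ ≤ e₁ := h1 ▸ le_max_left _ _
      have he2q : e₂ ≤ q₁ := by
        rw [← h2]; exact max_le h₁ (min_le_right _ _)
      have he2 : e₂ = q₁ := by
        rw [← h2, sat, min_eq_right (by linarith : q₁ ≤ e₁), max_eq_right h₁]
      have he1 : e₁ = p₂ := by
        rw [← h1, he2, sat, min_eq_left (by linarith : q₁ ≤ q₂), max_eq_left h₁₂.le]
      exact ⟨he1, he2⟩
    · rintro ⟨he1, he2⟩
      rw [he1, he2]
      constructor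
      · rw [sat, min_eq_left (by linarith : q₁ ≤ q₂), max_eq_left h₁₂.le]; ring
      · rw [sat, min_eq_right (by linarith : q₁ ≤ p₂), max_eq_right h₁]; ring
  · intro x₁ x₂ hx₁ hx₂
    -- Step 1: eventually q₁ ≤ x₁ t
    have hsat2_lb : ∀ z : ℝ, p₂ ≤ sat p₂ q₂ z := fun z => le_max_left _ _
    have step1 : ∀ᶠ t in atTop, q₁ ≤ x₁ t :=
      auxLower a p₂ q₁ hb h₁₂ x₁ (fun t => sat p₂ q₂ (x₂ t)) hx₁
        (fun t => hsat2_lb (x₂ t))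
    obtain ⟨T₁, hT₁⟩ := eventually_atTop.mp step1
    -- Step 2: x₂ → q₁. Beyond T₁, sat p₁ q₁ (x₁ t) = q₁.
    have hx₂lim : Tendsto x₂ atTop (nhds q₁) := by
      apply auxTendsto b q₁ T₁ hb' x₂ (fun t => sat p₁ q₁ (x₁ t)) hx₂
      intro t ht
      rw [sat, min_eq_right (hT₁ t ht), max_eq_right h₁]
    -- Step 3: eventually x₂ t ≤ p₂, so sat p₂ q₂ (x₂ t) = p₂, so x₁ → p₂.
    have hev : ∀ᶠ t in atTop, x₂ t < p₂ := hx₂lim.eventually_lt_const h₁₂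
    obtain ⟨T₂, hT₂⟩ := eventually_atTop.mp hev
    have hx₁lim : Tendsto x₁ atTop (nhds p₂) := by
      apply auxTendsto a p₂ T₂ hb x₁ (fun t => sat p₂ q₂ (x₂ t)) hx₁
      intro t ht
      rw [sat, min_eq_left (le_trans (hT₂ t ht).le h₂), max_eq_left (hT₂ t ht).le]
    exact ⟨hx₁lim, hx₂lim⟩
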